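/- If u is a smooth solution of Σ_i X_i( X_i u / √(1+|∇_ε u|²) ) = 0 on Ω, then v = ∂₂u solves X_i( a_{ij}(∇_ε u)/√(1+|∇_ε u|²) X_j v ) = −(a_{11}(∇_ε u)/√(1+|∇_ε u|²)) v³ − (a_{1j}(∇_ε u)/√(1+|∇_ε u|²)) v X_j v − X_i( (a_{i1}(∇_ε u)/√(1+|∇_ε u|²)) v² ) on Ω (summation over repeated indices i,j ∈ {1,2}). -/

import Mathlib

noncomputable section

/-- `X₁ = ∂₁ + u ∂₂` (for `i = 0`) and `X₂ = ε ∂₂` (for `i = 1`). -/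
def Xop (u : ℝ × ℝ → ℝ) (ε : ℝ) (i : Fin 2) (f : ℝ × ℝ → ℝ) (p : ℝ × ℝ) : ℝ :=
  if i = 0 then fderiv ℝ f p (1, 0) + u p * fderiv ℝ f p (0, 1)
  else ε * fderiv ℝ f p (0, 1)

/-- `a_{ij}(v) = δ_{ij} − v_i v_j/(1+|v|²)`. -/
def Amat (v : ℝ × ℝ) (i j : Fin 2) : ℝ :=
  (if i = j then 1 else 0)
    - (if i = 0 then v.1 else v.2) * (if j = 0 then v.1 else v.2) / (1 + v.1 ^ 2 + v.2 ^ 2)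

/-- `√(1+|∇_ε u|²)`. -/
def Wgt (u : ℝ × ℝ → ℝ) (ε : ℝ) (q : ℝ × ℝ) : ℝ :=
  Real.sqrt (1 + (Xop u ε 0 u q) ^ 2 + (Xop u ε 1 u q) ^ 2)

/-- The coefficients `a_{ij}(∇_ε u)`. -/
def Acoef (u : ℝ × ℝ → ℝ) (ε : ℝ) (q : ℝ × ℝ) (i j : Fin 2) : ℝ :=
  Amat (Xop u ε 0 u q, Xop u ε 1 u q) i j

lemma topadd : ((⊤:ℕ∞) : WithTop ℕ∞) + 1 ≤ ((⊤:ℕ∞) : WithTop ℕ∞) := by decide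
lemma twole : (2 : WithTop ℕ∞) ≤ ((⊤:ℕ∞) : WithTop ℕ∞) := by decide
lemma onele : ((⊤:ℕ∞) : WithTop ℕ∞) ≠ 0 := by decide

lemma contDiffAt_dd {u : ℝ×ℝ → ℝ} {r : ℝ×ℝ} (hu : ContDiffAt ℝ (⊤:ℕ∞) u r) (z : ℝ×ℝ) :
    ContDiffAt ℝ (⊤:ℕ∞) (fun w => fderiv ℝ u w z) r :=
  (hu.fderiv_right topadd).clm_apply contDiffAt_const

lemma fderiv_swap {u : ℝ×ℝ → ℝ} {r : ℝ×ℝ} (hu : ContDiffAt ℝ (⊤:ℕ∞) u r) (a b : ℝ×ℝ) :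
    fderiv ℝ (fun w => fderiv ℝ u w a) r b = fderiv ℝ (fun w => fderiv ℝ u w b) r a := by
  have hd : DifferentiableAt ℝ (fderiv ℝ u) r :=
    (hu.fderiv_right topadd).differentiableAt onele
  have h1 : fderiv ℝ (fun w => fderiv ℝ u w a) r b = fderiv ℝ (fderiv ℝ u) r b a := by
    rw [fderiv_clm_apply hd (differentiableAt_const a)]; simp
  have h2 : fderiv ℝ (fun w => fderiv ℝ u w b) r a = fderiv ℝ (fderiv ℝ u) r a b := by
    rw [fderiv_clm_apply hd (differentiableAt_const b)]; simp
  rw [h1, h2, (hu.isSymmSndFDerivAt (by rw [minSmoothness_of_isRCLikeNormedField]; exact twole)) b a]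

variable {f g : ℝ×ℝ → ℝ} {r z : ℝ×ℝ}

lemma Dadd (hf : DifferentiableAt ℝ f r) (hg : DifferentiableAt ℝ g r) (z : ℝ×ℝ) :
    fderiv ℝ (fun w => f w + g w) r z = fderiv ℝ f r z + fderiv ℝ g r z := by
  rw [fderiv_fun_add hf hg]; simp

lemma Dmul (hf : DifferentiableAt ℝ f r) (hg : DifferentiableAt ℝ g r) (z : ℝ×ℝ) :
    fderiv ℝ (fun w => f w * g w) r z = f r * fderiv ℝ g r z + g r * fderiv ℝ f r z := by
  rw [fderiv_fun_mul hf hg]; simp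

lemma Dcmul (c : ℝ) (hg : DifferentiableAt ℝ g r) (z : ℝ×ℝ) :
    fderiv ℝ (fun w => c * g w) r z = c * fderiv ℝ g r z := by
  rw [fderiv_const_mul hg]; simp

lemma Dsq (hf : DifferentiableAt ℝ f r) (z : ℝ×ℝ) :
    fderiv ℝ (fun w => f w ^ 2) r z = 2 * f r * fderiv ℝ f r z := by
  have := Dmul hf hf z
  simp only [← sq] at this
  rw [this]; ring

lemma Dinv (hg : DifferentiableAt ℝ g r) (h0 : g r ≠ 0) (z : ℝ×ℝ) :
    fderiv ℝ (fun w => (g w)⁻¹) r z = -(fderiv ℝ g r z) / g r ^ 2 := by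
  have hcomp : fderiv ℝ (Inv.inv ∘ g) r = (fderiv ℝ Inv.inv (g r)).comp (fderiv ℝ g r) :=
    fderiv_comp r (differentiableAt_inv h0) hg
  have : fderiv ℝ (fun w => (g w)⁻¹) r = (fderiv ℝ Inv.inv (g r)).comp (fderiv ℝ g r) := hcomp
  rw [this, fderiv_inv' h0]
  simp only [ContinuousLinearMap.comp_apply, ContinuousLinearMap.neg_apply,
    ContinuousLinearMap.mulLeftRight_apply]
  rw [neg_div, neg_inj, div_eq_mul_inv, pow_two, mul_inv]
  ring

lemma Ddiv (hf : DifferentiableAt ℝ f r) (hg : DifferentiableAt ℝ g r) (h0 : g r ≠ 0) (z : ℝ×ℝ) :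
    fderiv ℝ (fun w => f w / g w) r z
      = (fderiv ℝ f r z * g r - f r * fderiv ℝ g r z) / g r ^ 2 := by
  have h1 : fderiv ℝ (fun w => f w * (g w)⁻¹) r z
      = f r * fderiv ℝ (fun w => (g w)⁻¹) r z + (g r)⁻¹ * fderiv ℝ f r z :=
    Dmul hf (hg.inv h0) z
  simp only [div_eq_mul_inv]
  rw [h1, Dinv hg h0 z]
  field_simp
  ring

lemma Dsqrt (hf : DifferentiableAt ℝ f r) (h0 : f r ≠ 0) (z : ℝ×ℝ) :
    fderiv ℝ (fun w => Real.sqrt (f w)) r z = fderiv ℝ f r z / (2 * Real.sqrt (f r)) := by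
  rw [(hf.hasFDerivAt.sqrt h0).fderiv]; simp; ring


lemma Xop_zero (u : ℝ×ℝ→ℝ) (ε : ℝ) (f : ℝ×ℝ→ℝ) (p : ℝ×ℝ) :
    Xop u ε 0 f p = fderiv ℝ f p (1,0) + u p * fderiv ℝ f p (0,1) := rfl

lemma Xop_one (u : ℝ×ℝ→ℝ) (ε : ℝ) (f : ℝ×ℝ→ℝ) (p : ℝ×ℝ) :
    Xop u ε 1 f p = ε * fderiv ℝ f p (0,1) := rfl

lemma Wgt_eq (u : ℝ×ℝ→ℝ) (ε : ℝ) (w : ℝ×ℝ) :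
    Wgt u ε w = Real.sqrt (1 + (fderiv ℝ u w (1,0) + u w * fderiv ℝ u w (0,1))^2
      + (ε * fderiv ℝ u w (0,1))^2) := rfl

lemma onele' : (1 : WithTop ℕ∞) ≤ ((⊤:ℕ∞) : WithTop ℕ∞) := by decide

section
variable {u : ℝ×ℝ→ℝ} {ε : ℝ} {r : ℝ×ℝ}

lemma cd_v (hu : ContDiffAt ℝ (⊤:ℕ∞) u r) :
    ContDiffAt ℝ (⊤:ℕ∞) (fun w => fderiv ℝ u w (0,1)) r := contDiffAt_dd hu _

lemma cd_p1 (hu : ContDiffAt ℝ (⊤:ℕ∞) u r) (ε : ℝ) :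
    ContDiffAt ℝ (⊤:ℕ∞) (fun w => fderiv ℝ u w (1,0) + u w * fderiv ℝ u w (0,1)) r :=
  (contDiffAt_dd hu _).add (hu.mul (contDiffAt_dd hu _))

lemma cd_p2 (hu : ContDiffAt ℝ (⊤:ℕ∞) u r) (ε : ℝ) :
    ContDiffAt ℝ (⊤:ℕ∞) (fun w => ε * fderiv ℝ u w (0,1)) r :=
  contDiffAt_const.mul (contDiffAt_dd hu _)

lemma cd_G (hu : ContDiffAt ℝ (⊤:ℕ∞) u r) (ε : ℝ) :
    ContDiffAt ℝ (⊤:ℕ∞) (fun w => 1 + (fderiv ℝ u w (1,0) + u w * fderiv ℝ u w (0,1))^2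
      + (ε * fderiv ℝ u w (0,1))^2) r :=
  (contDiffAt_const.add ((cd_p1 hu ε).pow 2)).add ((cd_p2 hu ε).pow 2)

lemma G_pos (u : ℝ×ℝ→ℝ) (ε : ℝ) (r : ℝ×ℝ) :
    0 < 1 + (fderiv ℝ u r (1,0) + u r * fderiv ℝ u r (0,1))^2
      + (ε * fderiv ℝ u r (0,1))^2 := by positivity

lemma cd_W (hu : ContDiffAt ℝ (⊤:ℕ∞) u r) (ε : ℝ) :
    ContDiffAt ℝ (⊤:ℕ∞) (Wgt u ε) r := by
  have : ContDiffAt ℝ (⊤:ℕ∞) (fun w => Real.sqrt (1 + (fderiv ℝ u w (1,0)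
      + u w * fderiv ℝ u w (0,1))^2 + (ε * fderiv ℝ u w (0,1))^2)) r :=
    (Real.contDiffAt_sqrt (G_pos u ε r).ne').comp r (cd_G hu ε)
  exact this.congr_of_eventuallyEq (Filter.Eventually.of_forall fun w => (Wgt_eq u ε w))

lemma W_pos (u : ℝ×ℝ→ℝ) (ε : ℝ) (r : ℝ×ℝ) : 0 < Wgt u ε r := by
  rw [Wgt_eq]; exact Real.sqrt_pos.2 (G_pos u ε r)

end
lemma Acoef_eq (u : ℝ×ℝ→ℝ) (ε : ℝ) (r : ℝ×ℝ) (i j : Fin 2) :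
    Acoef u ε r i j = (if i = j then 1 else 0)
      - (if i = 0 then Xop u ε 0 u r else Xop u ε 1 u r)
        * (if j = 0 then Xop u ε 0 u r else Xop u ε 1 u r)
        / (1 + (Xop u ε 0 u r)^2 + (Xop u ε 1 u r)^2) := rfl

set_option maxHeartbeats 2000000 in
lemma step1 (u : ℝ×ℝ→ℝ) (ε : ℝ) (r : ℝ×ℝ) (hu : ContDiffAt ℝ (⊤:ℕ∞) u r) (i : Fin 2) :
    fderiv ℝ (fun w => Xop u ε i u w / Wgt u ε w) r (0,1)
      = (Acoef u ε r i 0 / Wgt u ε r) * Xop u ε 0 (fun w => fderiv ℝ u w (0,1)) r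
        + (Acoef u ε r i 1 / Wgt u ε r) * Xop u ε 1 (fun w => fderiv ℝ u w (0,1)) r
        + (Acoef u ε r i 0 / Wgt u ε r) * (fderiv ℝ u r (0,1))^2 := by
  have hv := cd_v hu
  have hv1 : ContDiffAt ℝ (⊤:ℕ∞) (fun w => fderiv ℝ u w (1,0)) r := contDiffAt_dd hu _
  have hp1 := cd_p1 hu ε
  have hp2 := cd_p2 hu ε
  have hG := cd_G hu ε
  have hGpos := G_pos u ε r
  have dv := hv.differentiableAt onele
  have dv1 := hv1.differentiableAt onele
  have du := hu.differentiableAt onele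
  have dp1 := hp1.differentiableAt onele
  have dp2 := hp2.differentiableAt onele
  have dG := hG.differentiableAt onele
  have hsne : Real.sqrt (1 + (fderiv ℝ u r (1,0) + u r * fderiv ℝ u r (0,1))^2
      + (ε * fderiv ℝ u r (0,1))^2) ≠ 0 := (Real.sqrt_pos.2 hGpos).ne'
  have dW : DifferentiableAt ℝ (fun w => Real.sqrt (1 + (fderiv ℝ u w (1,0)
      + u w * fderiv ℝ u w (0,1))^2 + (ε * fderiv ℝ u w (0,1))^2)) r :=
    (((Real.contDiffAt_sqrt hGpos.ne').comp r hG).differentiableAt onele)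
  have e_p1 : fderiv ℝ (fun w => fderiv ℝ u w (1,0) + u w * fderiv ℝ u w (0,1)) r (0,1)
      = fderiv ℝ (fun w => fderiv ℝ u w (0,1)) r (1,0)
        + (u r * fderiv ℝ (fun w => fderiv ℝ u w (0,1)) r (0,1)
           + fderiv ℝ u r (0,1) * fderiv ℝ u r (0,1)) := by
    rw [Dadd dv1 (du.fun_mul dv) (0,1), Dmul du dv (0,1), fderiv_swap hu (1,0) (0,1)]
  have e_p2 : fderiv ℝ (fun w => ε * fderiv ℝ u w (0,1)) r (0,1)
      = ε * fderiv ℝ (fun w => fderiv ℝ u w (0,1)) r (0,1) := Dcmul ε dv (0,1)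
  have e_G : fderiv ℝ (fun w => 1 + (fderiv ℝ u w (1,0) + u w * fderiv ℝ u w (0,1))^2
      + (ε * fderiv ℝ u w (0,1))^2) r (0,1)
      = 2 * (fderiv ℝ u r (1,0) + u r * fderiv ℝ u r (0,1))
          * fderiv ℝ (fun w => fderiv ℝ u w (1,0) + u w * fderiv ℝ u w (0,1)) r (0,1)
        + 2 * (ε * fderiv ℝ u r (0,1))
          * fderiv ℝ (fun w => ε * fderiv ℝ u w (0,1)) r (0,1) := by
    rw [Dadd ((differentiableAt_const (1:ℝ)).fun_add (dp1.fun_pow 2)) (dp2.fun_pow 2) (0,1),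
        Dadd (differentiableAt_const (1:ℝ)) (dp1.fun_pow 2) (0,1),
        Dsq dp1 (0,1), Dsq dp2 (0,1)]
    simp
  have e_W : fderiv ℝ (fun w => Real.sqrt (1 + (fderiv ℝ u w (1,0)
        + u w * fderiv ℝ u w (0,1))^2 + (ε * fderiv ℝ u w (0,1))^2)) r (0,1)
      = fderiv ℝ (fun w => 1 + (fderiv ℝ u w (1,0) + u w * fderiv ℝ u w (0,1))^2
          + (ε * fderiv ℝ u w (0,1))^2) r (0,1)
        / (2 * Real.sqrt (1 + (fderiv ℝ u r (1,0) + u r * fderiv ℝ u r (0,1))^2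
          + (ε * fderiv ℝ u r (0,1))^2)) :=
    Dsqrt dG hGpos.ne' (0,1)
  have hW2 : Real.sqrt (1 + (fderiv ℝ u r (1,0) + u r * fderiv ℝ u r (0,1))^2
      + (ε * fderiv ℝ u r (0,1))^2) ^ 2
      = 1 + (fderiv ℝ u r (1,0) + u r * fderiv ℝ u r (0,1))^2
        + (ε * fderiv ℝ u r (0,1))^2 := Real.sq_sqrt hGpos.le
  fin_cases i
  · have e_F : fderiv ℝ (fun w => (fderiv ℝ u w (1,0) + u w * fderiv ℝ u w (0,1))
        / Real.sqrt (1 + (fderiv ℝ u w (1,0) + u w * fderiv ℝ u w (0,1))^2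
          + (ε * fderiv ℝ u w (0,1))^2)) r (0,1)
        = (fderiv ℝ (fun w => fderiv ℝ u w (1,0) + u w * fderiv ℝ u w (0,1)) r (0,1)
            * Real.sqrt (1 + (fderiv ℝ u r (1,0) + u r * fderiv ℝ u r (0,1))^2
              + (ε * fderiv ℝ u r (0,1))^2)
           - (fderiv ℝ u r (1,0) + u r * fderiv ℝ u r (0,1))
            * fderiv ℝ (fun w => Real.sqrt (1 + (fderiv ℝ u w (1,0)
               + u w * fderiv ℝ u w (0,1))^2 + (ε * fderiv ℝ u w (0,1))^2)) r (0,1))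
          / Real.sqrt (1 + (fderiv ℝ u r (1,0) + u r * fderiv ℝ u r (0,1))^2
              + (ε * fderiv ℝ u r (0,1))^2) ^ 2 :=
      Ddiv dp1 dW hsne (0,1)
    simp only [Fin.zero_eta, Fin.mk_one, Xop_zero, Xop_one, Wgt_eq, Acoef_eq]
    norm_num
    rw [e_F, e_W, e_G, e_p1, e_p2]
    set A := fderiv ℝ (fun w => fderiv ℝ u w (0,1)) r (1,0) with hA
    set B := fderiv ℝ (fun w => fderiv ℝ u w (0,1)) r (0,1) with hB
    set V := fderiv ℝ u r (0,1) with hV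
    set D1 := fderiv ℝ u r (1,0) with hD1
    set U := u r with hU
    set W := Real.sqrt (1 + (D1 + U * V)^2 + (ε * V)^2) with hWdef
    rw [← hW2]
    field_simp
    ring
  · have e_F : fderiv ℝ (fun w => (ε * fderiv ℝ u w (0,1))
        / Real.sqrt (1 + (fderiv ℝ u w (1,0) + u w * fderiv ℝ u w (0,1))^2
          + (ε * fderiv ℝ u w (0,1))^2)) r (0,1)
        = (fderiv ℝ (fun w => ε * fderiv ℝ u w (0,1)) r (0,1)
            * Real.sqrt (1 + (fderiv ℝ u r (1,0) + u r * fderiv ℝ u r (0,1))^2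
              + (ε * fderiv ℝ u r (0,1))^2)
           - (ε * fderiv ℝ u r (0,1))
            * fderiv ℝ (fun w => Real.sqrt (1 + (fderiv ℝ u w (1,0)
               + u w * fderiv ℝ u w (0,1))^2 + (ε * fderiv ℝ u w (0,1))^2)) r (0,1))
          / Real.sqrt (1 + (fderiv ℝ u r (1,0) + u r * fderiv ℝ u r (0,1))^2
              + (ε * fderiv ℝ u r (0,1))^2) ^ 2 :=
      Ddiv dp2 dW hsne (0,1)
    simp only [Fin.zero_eta, Fin.mk_one, Xop_zero, Xop_one, Wgt_eq, Acoef_eq]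
    norm_num
    rw [e_F, e_W, e_G, e_p1, e_p2]
    set A := fderiv ℝ (fun w => fderiv ℝ u w (0,1)) r (1,0) with hA
    set B := fderiv ℝ (fun w => fderiv ℝ u w (0,1)) r (0,1) with hB
    set V := fderiv ℝ u r (0,1) with hV
    set D1 := fderiv ℝ u r (1,0) with hD1
    set U := u r with hU
    set W := Real.sqrt (1 + (D1 + U * V)^2 + (ε * V)^2) with hWdef
    rw [← hW2]
    field_simp
    ring

lemma Xop_congr {f g : ℝ×ℝ→ℝ} {q : ℝ×ℝ} (h : f =ᶠ[nhds q] g) (u : ℝ×ℝ→ℝ) (ε : ℝ) (i : Fin 2) :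
    Xop u ε i f q = Xop u ε i g q := by
  unfold Xop
  rw [h.fderiv_eq]

lemma Xop_add {f g : ℝ×ℝ→ℝ} {q : ℝ×ℝ} (hf : DifferentiableAt ℝ f q)
    (hg : DifferentiableAt ℝ g q) (u : ℝ×ℝ→ℝ) (ε : ℝ) (i : Fin 2) :
    Xop u ε i (fun r => f r + g r) q = Xop u ε i f q + Xop u ε i g q := by
  unfold Xop
  rw [Dadd hf hg (1,0), Dadd hf hg (0,1)]
  split <;> ring

lemma comm0 {u f : ℝ×ℝ→ℝ} {q : ℝ×ℝ} (hu : ContDiffAt ℝ (⊤:ℕ∞) u q)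
    (hf : ContDiffAt ℝ (⊤:ℕ∞) f q) (ε : ℝ) :
    fderiv ℝ (fun r => Xop u ε 0 f r) q (0,1)
      = Xop u ε 0 (fun w => fderiv ℝ f w (0,1)) q
        + fderiv ℝ u q (0,1) * fderiv ℝ f q (0,1) := by
  have d1 := (contDiffAt_dd hf (1,0)).differentiableAt onele
  have d2 := (contDiffAt_dd hf (0,1)).differentiableAt onele
  have du := hu.differentiableAt onele
  simp only [Xop_zero]
  rw [Dadd d1 (du.fun_mul d2) (0,1), Dmul du d2 (0,1), fderiv_swap hf (1,0) (0,1)]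
  ring

lemma comm1 {f : ℝ×ℝ→ℝ} {q : ℝ×ℝ} (hf : ContDiffAt ℝ (⊤:ℕ∞) f q) (u' : ℝ×ℝ→ℝ) (ε : ℝ) :
    fderiv ℝ (fun r => Xop u' ε 1 f r) q (0,1)
      = Xop u' ε 1 (fun w => fderiv ℝ f w (0,1)) q := by
  have d2 := (contDiffAt_dd hf (0,1)).differentiableAt onele
  simp only [Xop_one]
  rw [Dcmul ε d2 (0,1)]


/-- If `u` is a smooth solution of the approximating minimal surface equation
`Σ_i X_i(X_i u / √(1+|∇_ε u|²)) = 0`, then `v = ∂₂u` solves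
`X_i(a_{ij}(∇_ε u)/W · X_j v) = −(a_{11}/W) v³ − (a_{1j}/W) v X_j v − X_i((a_{i1}/W) v²)`. -/
theorem derived_equation_for_v (Ω : Set (ℝ × ℝ)) (hΩ : IsOpen Ω)
    (ε : ℝ) (hε : 0 < ε) (u : ℝ × ℝ → ℝ) (hu : ContDiffOn ℝ (⊤ : ℕ∞) u Ω)
    (hmin : ∀ q ∈ Ω, ∑ i : Fin 2, Xop u ε i (fun r => Xop u ε i u r / Wgt u ε r) q = 0) :
    ∀ q ∈ Ω,
      (∑ i : Fin 2, ∑ j : Fin 2,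
        Xop u ε i (fun r => Acoef u ε r i j / Wgt u ε r
          * Xop u ε j (fun w => fderiv ℝ u w (0, 1)) r) q)
      = -(Acoef u ε q 0 0 / Wgt u ε q) * (fderiv ℝ u q (0, 1)) ^ 3
        - (∑ j : Fin 2, (Acoef u ε q 0 j / Wgt u ε q) * fderiv ℝ u q (0, 1)
            * Xop u ε j (fun w => fderiv ℝ u w (0, 1)) q)
        - ∑ i : Fin 2, Xop u ε i
            (fun r => Acoef u ε r i 0 / Wgt u ε r * (fderiv ℝ u r (0, 1)) ^ 2) q := by
  intro q hq
  have hqn : Ω ∈ nhds q := hΩ.mem_nhds hq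
  have huq : ContDiffAt ℝ (⊤:ℕ∞) u q := hu.contDiffAt hqn
  have hWne : Wgt u ε q ≠ 0 := (W_pos u ε q).ne'
  have cdW : ContDiffAt ℝ (⊤:ℕ∞) (Wgt u ε) q := cd_W huq ε
  have hF0 : ContDiffAt ℝ (⊤:ℕ∞) (fun r => Xop u ε 0 u r / Wgt u ε r) q :=
    (cd_p1 huq ε).div cdW hWne
  have hF1 : ContDiffAt ℝ (⊤:ℕ∞) (fun r => Xop u ε 1 u r / Wgt u ε r) q :=
    (cd_p2 huq ε).div cdW hWne
  have hGne : (1 + (Xop u ε 0 u q)^2 + (Xop u ε 1 u q)^2) ≠ 0 := by positivity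
  have cdX0u : ContDiffAt ℝ (⊤:ℕ∞) (fun r => Xop u ε 0 u r) q := cd_p1 huq ε
  have cdX1u : ContDiffAt ℝ (⊤:ℕ∞) (fun r => Xop u ε 1 u r) q := cd_p2 huq ε
  have cdGf : ContDiffAt ℝ (⊤:ℕ∞) (fun r => 1 + (Xop u ε 0 u r)^2 + (Xop u ε 1 u r)^2) q :=
    cd_G huq ε
  have cdA : ∀ i j : Fin 2, ContDiffAt ℝ (⊤:ℕ∞) (fun r => Acoef u ε r i j) q := by
    intro i j
    simp only [Acoef_eq]
    apply ContDiffAt.sub contDiffAt_const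
    apply ContDiffAt.div _ cdGf hGne
    fin_cases i <;> fin_cases j <;> simp only [Fin.zero_eta, Fin.mk_one] <;> norm_num
    · exact cdX0u.mul cdX0u
    · exact cdX0u.mul cdX1u
    · exact cdX1u.mul cdX0u
    · exact cdX1u.mul cdX1u
  have cdXv0 : ContDiffAt ℝ (⊤:ℕ∞)
      (fun r => Xop u ε 0 (fun w => fderiv ℝ u w (0,1)) r) q := by
    simp only [Xop_zero]
    exact (contDiffAt_dd (cd_v huq) (1,0)).add (huq.mul (contDiffAt_dd (cd_v huq) (0,1)))
  have cdXv1 : ContDiffAt ℝ (⊤:ℕ∞)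
      (fun r => Xop u ε 1 (fun w => fderiv ℝ u w (0,1)) r) q := by
    simp only [Xop_one]
    exact contDiffAt_const.mul (contDiffAt_dd (cd_v huq) (0,1))
  have dG00 : DifferentiableAt ℝ
      (fun r => Acoef u ε r 0 0 / Wgt u ε r * Xop u ε 0 (fun w => fderiv ℝ u w (0,1)) r) q :=
    (((cdA 0 0).div cdW hWne).mul cdXv0).differentiableAt onele
  have dG01 : DifferentiableAt ℝ
      (fun r => Acoef u ε r 0 1 / Wgt u ε r * Xop u ε 1 (fun w => fderiv ℝ u w (0,1)) r) q :=
    (((cdA 0 1).div cdW hWne).mul cdXv1).differentiableAt onele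
  have dG10 : DifferentiableAt ℝ
      (fun r => Acoef u ε r 1 0 / Wgt u ε r * Xop u ε 0 (fun w => fderiv ℝ u w (0,1)) r) q :=
    (((cdA 1 0).div cdW hWne).mul cdXv0).differentiableAt onele
  have dG11 : DifferentiableAt ℝ
      (fun r => Acoef u ε r 1 1 / Wgt u ε r * Xop u ε 1 (fun w => fderiv ℝ u w (0,1)) r) q :=
    (((cdA 1 1).div cdW hWne).mul cdXv1).differentiableAt onele
  have dH0 : DifferentiableAt ℝ
      (fun r => Acoef u ε r 0 0 / Wgt u ε r * (fderiv ℝ u r (0,1))^2) q :=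
    (((cdA 0 0).div cdW hWne).mul ((cd_v huq).pow 2)).differentiableAt onele
  have dH1 : DifferentiableAt ℝ
      (fun r => Acoef u ε r 1 0 / Wgt u ε r * (fderiv ℝ u r (0,1))^2) q :=
    (((cdA 1 0).div cdW hWne).mul ((cd_v huq).pow 2)).differentiableAt onele
  have hev0 : (fun w => fderiv ℝ (fun r => Xop u ε 0 u r / Wgt u ε r) w (0,1)) =ᶠ[nhds q]
      (fun r => Acoef u ε r 0 0 / Wgt u ε r * Xop u ε 0 (fun w => fderiv ℝ u w (0,1)) r
        + Acoef u ε r 0 1 / Wgt u ε r * Xop u ε 1 (fun w => fderiv ℝ u w (0,1)) r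
        + Acoef u ε r 0 0 / Wgt u ε r * (fderiv ℝ u r (0,1))^2) := by
    filter_upwards [hqn] with r hr
    exact step1 u ε r (hu.contDiffAt (hΩ.mem_nhds hr)) 0
  have hev1 : (fun w => fderiv ℝ (fun r => Xop u ε 1 u r / Wgt u ε r) w (0,1)) =ᶠ[nhds q]
      (fun r => Acoef u ε r 1 0 / Wgt u ε r * Xop u ε 0 (fun w => fderiv ℝ u w (0,1)) r
        + Acoef u ε r 1 1 / Wgt u ε r * Xop u ε 1 (fun w => fderiv ℝ u w (0,1)) r
        + Acoef u ε r 1 0 / Wgt u ε r * (fderiv ℝ u r (0,1))^2) := by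
    filter_upwards [hqn] with r hr
    exact step1 u ε r (hu.contDiffAt (hΩ.mem_nhds hr)) 1
  have e1 : Xop u ε 0
      (fun r => Acoef u ε r 0 0 / Wgt u ε r * Xop u ε 0 (fun w => fderiv ℝ u w (0,1)) r
        + Acoef u ε r 0 1 / Wgt u ε r * Xop u ε 1 (fun w => fderiv ℝ u w (0,1)) r
        + Acoef u ε r 0 0 / Wgt u ε r * (fderiv ℝ u r (0,1))^2) q
      = Xop u ε 0 (fun r => Acoef u ε r 0 0 / Wgt u ε r
          * Xop u ε 0 (fun w => fderiv ℝ u w (0,1)) r) q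
        + Xop u ε 0 (fun r => Acoef u ε r 0 1 / Wgt u ε r
          * Xop u ε 1 (fun w => fderiv ℝ u w (0,1)) r) q
        + Xop u ε 0 (fun r => Acoef u ε r 0 0 / Wgt u ε r * (fderiv ℝ u r (0,1))^2) q := by
    rw [Xop_add (dG00.fun_add dG01) dH0 u ε 0, Xop_add dG00 dG01 u ε 0]
  have e2 : Xop u ε 1
      (fun r => Acoef u ε r 1 0 / Wgt u ε r * Xop u ε 0 (fun w => fderiv ℝ u w (0,1)) r
        + Acoef u ε r 1 1 / Wgt u ε r * Xop u ε 1 (fun w => fderiv ℝ u w (0,1)) r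
        + Acoef u ε r 1 0 / Wgt u ε r * (fderiv ℝ u r (0,1))^2) q
      = Xop u ε 1 (fun r => Acoef u ε r 1 0 / Wgt u ε r
          * Xop u ε 0 (fun w => fderiv ℝ u w (0,1)) r) q
        + Xop u ε 1 (fun r => Acoef u ε r 1 1 / Wgt u ε r
          * Xop u ε 1 (fun w => fderiv ℝ u w (0,1)) r) q
        + Xop u ε 1 (fun r => Acoef u ε r 1 0 / Wgt u ε r * (fderiv ℝ u r (0,1))^2) q := by
    rw [Xop_add (dG10.fun_add dG11) dH1 u ε 1, Xop_add dG10 dG11 u ε 1]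
  have e3 := Xop_congr hev0 u ε 0
  have e4 := Xop_congr hev1 u ε 1
  have e5 := comm0 huq hF0 ε
  have e6 := comm1 hF1 u ε
  have hzero : (fun r => Xop u ε 0 (fun w => Xop u ε 0 u w / Wgt u ε w) r
      + Xop u ε 1 (fun w => Xop u ε 1 u w / Wgt u ε w) r) =ᶠ[nhds q] (fun _ => (0:ℝ)) := by
    filter_upwards [hqn] with r hr
    have h := hmin r hr
    simpa [Fin.sum_univ_two] using h
  have hd0 : DifferentiableAt ℝ (fun r => Xop u ε 0 (fun w => Xop u ε 0 u w / Wgt u ε w) r) q := by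
    simp only [Xop_zero]
    exact ((contDiffAt_dd hF0 (1,0)).differentiableAt onele).add
      ((huq.differentiableAt onele).mul ((contDiffAt_dd hF0 (0,1)).differentiableAt onele))
  have hd1 : DifferentiableAt ℝ (fun r => Xop u ε 1 (fun w => Xop u ε 1 u w / Wgt u ε w) r) q := by
    simp only [Xop_one]
    exact (differentiableAt_const ε).mul ((contDiffAt_dd hF1 (0,1)).differentiableAt onele)
  have e7 : fderiv ℝ (fun r => Xop u ε 0 (fun w => Xop u ε 0 u w / Wgt u ε w) r) q (0,1)
      + fderiv ℝ (fun r => Xop u ε 1 (fun w => Xop u ε 1 u w / Wgt u ε w) r) q (0,1) = 0 := by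
    rw [← Dadd hd0 hd1 (0,1), hzero.fderiv_eq]
    simp
  have e8 := step1 u ε q huq 0
  simp only [Fin.sum_univ_two]
  linear_combination (-1:ℝ) * e1 - e2 - e3 - e4 - e5 - e6 + e7 - fderiv ℝ u q (0,1) * e8
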